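/- arXiv:1510.02565 — 8 statements merged into one kernel-verified Lean document; each statement's English description precedes it below -/
import Mathlib

section
/- A point (x,y) ∈ S is a fixed point of the evolution operator H if and only if x = (1,0,…,0) or y = (1,0,…,0); that is, Fix(H) = {((1,0,…,0),(y_1,…,y_ν)) : Σ_{k=1}^ν y_k = 1, y_k ≥ 0} ∪ {((x_1,…,x_n),(1,0,…,0)) : Σ_{i=1}^n x_i = 1, x_i ≥ 0}. -/
/-- The evolution operator `H` of the hard-constrained bisexual population on
`ℝ^{n+1} × ℝ^{ν+1}` (female types `0,…,n`, male types `0,…,ν`; type "1" is index `0`). -/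
def evolH (n ν : ℕ) (z : (Fin (n + 1) → ℝ) × (Fin (ν + 1) → ℝ)) :
    (Fin (n + 1) → ℝ) × (Fin (ν + 1) → ℝ) :=
  (fun j => if j = 0 then 1 - z.2 0 * (1 - z.1 0) else z.2 0 * z.1 j,
   fun l => if l = 0 then 1 - z.1 0 * (1 - z.2 0) else z.1 0 * z.2 l)

lemma simplex_eq_single {m : ℕ} {f : Fin (m + 1) → ℝ}
    (hf : f ∈ stdSimplex ℝ (Fin (m + 1))) (h0 : f 0 = 1) : f = Pi.single 0 1 := by
  obtain ⟨hpos, hsum⟩ := hf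
  have key : ∑ i ∈ Finset.univ.erase 0, f i = 0 := by
    have h := Finset.add_sum_erase Finset.univ f (Finset.mem_univ (0 : Fin (m + 1)))
    rw [hsum, h0] at h
    linarith
  funext i
  by_cases hi : i = 0
  · subst hi; simp [h0]
  · have hz : f i = 0 :=
      (Finset.sum_eq_zero_iff_of_nonneg (fun j _ => hpos j)).mp key i
        (Finset.mem_erase.mpr ⟨hi, Finset.mem_univ i⟩)
    simp [hz, Pi.single_eq_of_ne hi]

/-- Fix(H) is the union of the two faces `{x = (1,0,…,0)}` and `{y = (1,0,…,0)}` of `S`. -/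
theorem fix_evolH (n ν : ℕ) :
    {z ∈ stdSimplex ℝ (Fin (n + 1)) ×ˢ stdSimplex ℝ (Fin (ν + 1)) | evolH n ν z = z} =
      {z ∈ stdSimplex ℝ (Fin (n + 1)) ×ˢ stdSimplex ℝ (Fin (ν + 1)) |
          z.1 = Pi.single 0 1} ∪
      {z ∈ stdSimplex ℝ (Fin (n + 1)) ×ˢ stdSimplex ℝ (Fin (ν + 1)) |
          z.2 = Pi.single 0 1} := by
  ext z
  simp only [Set.mem_setOf_eq, Set.mem_union, Set.mem_prod]
  constructor
  · rintro ⟨⟨hx, hy⟩, hfix⟩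
    have h1 := congrFun (congrArg Prod.fst hfix) 0
    simp only [evolH, if_true, eq_self_iff_true] at h1
    have hprod : (1 - z.2 0) * (1 - z.1 0) = 0 := by linear_combination h1
    rcases mul_eq_zero.mp hprod with h | h
    · exact Or.inr ⟨⟨hx, hy⟩, simplex_eq_single hy (by linarith)⟩
    · exact Or.inl ⟨⟨hx, hy⟩, simplex_eq_single hx (by linarith)⟩
  · rintro (⟨hS, h⟩ | ⟨hS, h⟩) <;> refine ⟨hS, ?_⟩ <;>
      refine Prod.ext (funext fun j => ?_) (funext fun l => ?_)
    · by_cases hj : j = 0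
      · simp [evolH, hj, h]
      · simp [evolH, hj, h, Pi.single_eq_of_ne hj]
    · by_cases hl : l = 0 <;> simp [evolH, hl, h]
    · by_cases hj : j = 0 <;> simp [evolH, hj, h]
    · by_cases hl : l = 0
      · simp [evolH, hl, h]
      · simp [evolH, hl, h, Pi.single_eq_of_ne hl]
end

section
/- Let z^{(0)} = ((x_1^{(0)},…,x_n^{(0)}),(y_1^{(0)},…,y_ν^{(0)})) ∈ S with x_1^{(0)} ≠ 0 and y_1^{(0)} ≠ 0, and let z^{(m)} = H^m(z^{(0)}). Then: (a) if x_1^{(0)} = y_1^{(0)}, then lim_{m→∞} z^{(m)} = ((1,0,…,0),(1,0,…,0)); (b) if x_1^{(0)} > y_1^{(0)}, then lim_{m→∞} z^{(m)} = ((1,0,…,0),(1−x_1^{(0)}+y_1^{(0)}, y*_2,…,y*_ν)) where y*_l = (x_1^{(0)}−y_1^{(0)}) y_l^{(0)} / (1−y_1^{(0)}) for l = 2,…,ν; (c) if x_1^{(0)} < y_1^{(0)}, then lim_{m→∞} z^{(m)} = ((1+x_1^{(0)}−y_1^{(0)}, x*_2,…,x*_n),(1,0,…,0)) where x*_j = (y_1^{(0)}−x_1^{(0)})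 x_j^{(0)} / (1−x_1^{(0)}) for j = 2,…,n. -/
open Filter Topology

/-- The core convergence lemma for the `(u, v) = (1 - x₁, 1 - y₁)` dynamics. -/
lemma evolH_core (u v : ℕ → ℝ) (h0 : 0 ≤ u 0) (huv : u 0 ≤ v 0) (h1 : v 0 ≤ 1)
    (hu : ∀ m, u (m + 1) = (1 - v m) * u m) (hv : ∀ m, v (m + 1) = (1 - u m) * v m) :
    Tendsto u atTop (𝓝 0) ∧ Tendsto v atTop (𝓝 (v 0 - u 0)) := by
  have key : ∀ m, 0 ≤ u m ∧ u m ≤ v m ∧ v m ≤ 1 := by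
    intro m
    induction m with
    | zero => exact ⟨h0, huv, h1⟩
    | succ m ih =>
      obtain ⟨ih0, ihuv, ih1⟩ := ih
      refine ⟨?_, ?_, ?_⟩
      · rw [hu]; exact mul_nonneg (by linarith) ih0
      · rw [hu, hv]; nlinarith
      · rw [hv]; nlinarith
  have hdiff : ∀ m, v m - u m = v 0 - u 0 := by
    intro m
    induction m with
    | zero => rfl
    | succ m ih => rw [hu, hv]; linear_combination ih
  have anti : Antitone u := by
    apply antitone_nat_of_succ_le
    intro m
    obtain ⟨h0', huv', h1'⟩ := key m
    rw [hu]; nlinarith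
  have hbdd : BddBelow (Set.range u) := ⟨0, by rintro x ⟨m, rfl⟩; exact (key m).1⟩
  have hlim : Tendsto u atTop (𝓝 (⨅ m, u m)) := tendsto_atTop_ciInf anti hbdd
  set L := ⨅ m, u m with hLdef
  have hL0 : 0 ≤ L := le_ciInf fun m => (key m).1
  have hshift : Tendsto (fun m => u (m + 1)) atTop (𝓝 L) :=
    hlim.comp (tendsto_add_atTop_nat 1)
  have hvlim : Tendsto v atTop (𝓝 (L + (v 0 - u 0))) := by
    have h := hlim.add_const (v 0 - u 0)
    refine h.congr fun m => ?_
    linarith [hdiff m]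
  have hlim2 : Tendsto (fun m => u (m + 1)) atTop (𝓝 ((1 - (L + (v 0 - u 0))) * L)) := by
    have h := ((tendsto_const_nhds (x := (1 : ℝ))).sub hvlim).mul hlim
    exact h.congr fun m => (hu m).symm
  have heq : L = (1 - (L + (v 0 - u 0))) * L := tendsto_nhds_unique hshift hlim2
  have hc : 0 ≤ v 0 - u 0 := by linarith
  have hL : L = 0 := by nlinarith [sq_nonneg L, mul_nonneg hc hL0]
  rw [hL] at hlim hvlim
  exact ⟨hlim, by simpa using hvlim⟩

/-- In the standard simplex, coordinates are at most `1`. -/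
lemma stdSimplex_le_one {k : ℕ} {x : Fin (k + 1) → ℝ} (hx : x ∈ stdSimplex ℝ (Fin (k + 1)))
    (i : Fin (k + 1)) : x i ≤ 1 := by
  have := Finset.single_le_sum (f := x) (fun j _ => hx.1 j) (Finset.mem_univ i)
  rwa [hx.2] at this

/-- In the standard simplex, if one coordinate is `1`, the others vanish. -/
lemma stdSimplex_eq_zero {k : ℕ} {x : Fin (k + 1) → ℝ} (hx : x ∈ stdSimplex ℝ (Fin (k + 1)))
    (h1 : x 0 = 1) {j : Fin (k + 1)} (hj : j ≠ 0) : x j = 0 := by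
  have hsum : ∑ i ∈ Finset.univ.erase 0, x i = 0 := by
    have := Finset.add_sum_erase Finset.univ x (Finset.mem_univ (0 : Fin (k + 1)))
    rw [hx.2] at this
    linarith [this, h1]
  have := (Finset.sum_eq_zero_iff_of_nonneg (fun i _ => hx.1 i)).mp hsum j
    (Finset.mem_erase.mpr ⟨hj, Finset.mem_univ j⟩)
  exact this

/-- The main convergence result, in the case `y₁⁰ ≤ x₁⁰`. -/
lemma evolH_aux (n ν : ℕ) (z : (Fin (n + 1) → ℝ) × (Fin (ν + 1) → ℝ))
    (hz : z ∈ stdSimplex ℝ (Fin (n + 1)) ×ˢ stdSimplex ℝ (Fin (ν + 1)))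
    (h : z.2 0 ≤ z.1 0) :
    Tendsto (fun m => (evolH n ν)^[m] z) atTop
      (𝓝 ((Pi.single 0 1 : Fin (n + 1) → ℝ),
        fun l : Fin (ν + 1) =>
          if l = 0 then 1 - z.1 0 + z.2 0 else (z.1 0 - z.2 0) * z.2 l / (1 - z.2 0))) := by
  obtain ⟨hz1, hz2⟩ := hz
  set f := evolH n ν with hf
  set U : ℕ → ℝ := fun m => 1 - (f^[m] z).1 0 with hUdef
  set V : ℕ → ℝ := fun m => 1 - (f^[m] z).2 0 with hVdef
  have hstep : ∀ m, f^[m + 1] z = f (f^[m] z) := fun m => Function.iterate_succ_apply' f m z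
  have hU : ∀ m, U (m + 1) = (1 - V m) * U m := by
    intro m
    simp only [hUdef, hVdef, hstep]
    simp only [hf, evolH, if_pos rfl, if_true]
    ring
  have hV : ∀ m, V (m + 1) = (1 - U m) * V m := by
    intro m
    simp only [hUdef, hVdef, hstep]
    simp only [hf, evolH, if_pos rfl, if_true]
    ring
  have hU0 : U 0 = 1 - z.1 0 := rfl
  have hV0 : V 0 = 1 - z.2 0 := rfl
  obtain ⟨hUlim, hVlim⟩ := evolH_core U V
    (by rw [hU0]; linarith [stdSimplex_le_one hz1 0])
    (by rw [hU0, hV0]; linarith)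
    (by rw [hV0]; linarith [hz2.1 0])
    hU hV
  have hVlim' : Tendsto V atTop (𝓝 (z.1 0 - z.2 0)) := by
    rw [hV0, hU0] at hVlim; convert hVlim using 2; ring
  -- scaling identities
  have hscaleX : ∀ (j : Fin (n + 1)), j ≠ 0 → ∀ m, U 0 * (f^[m] z).1 j = z.1 j * U m := by
    intro j hj m
    induction m with
    | zero => simp [hU0]; ring
    | succ m ih =>
      have hrec : (f^[m + 1] z).1 j = (1 - V m) * (f^[m] z).1 j := by
        rw [hstep]
        show (if j = 0 then _ else (f^[m] z).2 0 * (f^[m] z).1 j) = _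
        rw [if_neg hj]
        simp only [hVdef]; ring
      rw [hrec, hU]
      linear_combination (1 - V m) * ih
  have hscaleY : ∀ (l : Fin (ν + 1)), l ≠ 0 → ∀ m, V 0 * (f^[m] z).2 l = z.2 l * V m := by
    intro l hl m
    induction m with
    | zero => simp [hV0]; ring
    | succ m ih =>
      have hrec : (f^[m + 1] z).2 l = (1 - U m) * (f^[m] z).2 l := by
        rw [hstep]
        show (if l = 0 then _ else (f^[m] z).1 0 * (f^[m] z).2 l) = _
        rw [if_neg hl]
        simp only [hUdef]; ring
      rw [hrec, hV]
      linear_combination (1 - U m) * ih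
  apply Tendsto.prodMk_nhds
  · rw [tendsto_pi_nhds]
    intro j
    by_cases hj : j = 0
    · subst hj
      rw [Pi.single_eq_same]
      have : Tendsto (fun m => 1 - U m) atTop (𝓝 (1 - 0)) := tendsto_const_nhds.sub hUlim
      simpa [hUdef] using this
    · rw [Pi.single_eq_of_ne hj]
      by_cases h0 : U 0 = 0
      · -- then z.1 j = 0 and the trajectory is constantly 0
        have hx1 : z.1 0 = 1 := by rw [hU0] at h0; linarith
        have hz0 : z.1 j = 0 := stdSimplex_eq_zero hz1 hx1 hj
        have : ∀ m, (f^[m] z).1 j = 0 := by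
          intro m
          induction m with
          | zero => exact hz0
          | succ m ih =>
            rw [hstep]
            show (if j = 0 then _ else (f^[m] z).2 0 * (f^[m] z).1 j) = 0
            rw [if_neg hj, ih, mul_zero]
        simpa [this] using tendsto_const_nhds (α := ℝ) (f := atTop (α := ℕ))
      · have heq : ∀ m, (f^[m] z).1 j = z.1 j * U m / U 0 := by
          intro m
          field_simp
          linarith [hscaleX j hj m]
        have : Tendsto (fun m => z.1 j * U m / U 0) atTop (𝓝 (z.1 j * 0 / U 0)) :=
          (tendsto_const_nhds.mul hUlim).div_const _
        simp only [mul_zero, zero_div] at this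
        exact this.congr fun m => (heq m).symm
  · rw [tendsto_pi_nhds]
    intro l
    by_cases hl : l = 0
    · subst hl
      rw [if_pos rfl]
      have : Tendsto (fun m => 1 - V m) atTop (𝓝 (1 - (z.1 0 - z.2 0))) :=
        tendsto_const_nhds.sub hVlim'
      have h2 : (1 : ℝ) - (z.1 0 - z.2 0) = 1 - z.1 0 + z.2 0 := by ring
      rw [h2] at this
      simpa [hVdef] using this
    · rw [if_neg hl]
      by_cases h0 : V 0 = 0
      · have hy1 : z.2 0 = 1 := by rw [hV0] at h0; linarith
        have hz0 : z.2 l = 0 := stdSimplex_eq_zero hz2 hy1 hl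
        have : ∀ m, (f^[m] z).2 l = 0 := by
          intro m
          induction m with
          | zero => exact hz0
          | succ m ih =>
            rw [hstep]
            show (if l = 0 then _ else (f^[m] z).1 0 * (f^[m] z).2 l) = 0
            rw [if_neg hl, ih, mul_zero]
        simp only [hz0, mul_zero, zero_div]
        simpa [this] using tendsto_const_nhds (α := ℝ) (f := atTop (α := ℕ))
      · have heq : ∀ m, (f^[m] z).2 l = z.2 l * V m / V 0 := by
          intro m
          field_simp
          linarith [hscaleY l hl m]
        have : Tendsto (fun m => z.2 l * V m / V 0) atTop
            (𝓝 (z.2 l * (z.1 0 - z.2 0) / V 0)) :=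
          (tendsto_const_nhds.mul hVlim').div_const _
        have h2 : z.2 l * (z.1 0 - z.2 0) / V 0 = (z.1 0 - z.2 0) * z.2 l / (1 - z.2 0) := by
          rw [hV0]; ring
        rw [h2] at this
        exact this.congr fun m => (heq m).symm

/-- Swapping the two components conjugates `evolH n ν` into `evolH ν n`. -/
lemma evolH_swap (n ν : ℕ) (z : (Fin (n + 1) → ℝ) × (Fin (ν + 1) → ℝ)) (m : ℕ) :
    Prod.swap ((evolH n ν)^[m] z) = (evolH ν n)^[m] z.swap := by
  induction m with
  | zero => rfl
  | succ m ih =>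
    rw [Function.iterate_succ_apply', Function.iterate_succ_apply', ← ih]
    rfl

/-- Limits of trajectories of `H` starting from a point of `S` with `x₁⁰ ≠ 0` and `y₁⁰ ≠ 0`. -/
theorem limit_evolH (n ν : ℕ) (z : (Fin (n + 1) → ℝ) × (Fin (ν + 1) → ℝ))
    (hz : z ∈ stdSimplex ℝ (Fin (n + 1)) ×ˢ stdSimplex ℝ (Fin (ν + 1)))
    (hx : z.1 0 ≠ 0) (hy : z.2 0 ≠ 0) :
    (z.1 0 = z.2 0 →
      Tendsto (fun m => (evolH n ν)^[m] z) atTop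
        (𝓝 ((Pi.single 0 1 : Fin (n + 1) → ℝ), (Pi.single 0 1 : Fin (ν + 1) → ℝ)))) ∧
    (z.1 0 > z.2 0 →
      Tendsto (fun m => (evolH n ν)^[m] z) atTop
        (𝓝 ((Pi.single 0 1 : Fin (n + 1) → ℝ),
          fun l : Fin (ν + 1) =>
            if l = 0 then 1 - z.1 0 + z.2 0 else (z.1 0 - z.2 0) * z.2 l / (1 - z.2 0)))) ∧
    (z.1 0 < z.2 0 →
      Tendsto (fun m => (evolH n ν)^[m] z) atTop
        (𝓝 ((fun j : Fin (n + 1) =>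
            if j = 0 then 1 + z.1 0 - z.2 0 else (z.2 0 - z.1 0) * z.1 j / (1 - z.1 0)),
          (Pi.single 0 1 : Fin (ν + 1) → ℝ)))) := by
  refine ⟨?_, ?_, ?_⟩
  · intro hab
    have T := evolH_aux n ν z hz (le_of_eq hab.symm)
    convert T using 3
    funext l
    by_cases hl : l = 0
    · subst hl; rw [if_pos rfl, Pi.single_eq_same]; linarith [hab]
    · rw [if_neg hl, Pi.single_eq_of_ne hl, hab]
      simp
  · intro hab
    exact evolH_aux n ν z hz (le_of_lt hab)
  · intro hab
    have hzswap : z.swap ∈ stdSimplex ℝ (Fin (ν + 1)) ×ˢ stdSimplex ℝ (Fin (n + 1)) :=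
      ⟨hz.2, hz.1⟩
    have T := evolH_aux ν n z.swap hzswap (le_of_lt hab)
    have T' := ((Continuous.tendsto continuous_swap _).comp T)
    have T'' : Tendsto (fun m => (evolH n ν)^[m] z) atTop
        (𝓝 (Prod.swap ((Pi.single 0 1 : Fin (ν + 1) → ℝ),
          fun j : Fin (n + 1) =>
            if j = 0 then 1 - z.swap.1 0 + z.swap.2 0
            else (z.swap.1 0 - z.swap.2 0) * z.swap.2 j / (1 - z.swap.2 0)))) := by
      refine T'.congr fun m => ?_
      show Prod.swap ((evolH ν n)^[m] z.swap) = _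
      rw [← evolH_swap, Prod.swap_swap]
    rw [Prod.swap_prod_mk] at T''
    have hfst : (fun j : Fin (n + 1) =>
        if j = 0 then 1 + z.1 0 - z.2 0 else (z.2 0 - z.1 0) * z.1 j / (1 - z.1 0)) =
        (fun j : Fin (n + 1) =>
          if j = 0 then 1 - z.swap.1 0 + z.swap.2 0
          else (z.swap.1 0 - z.swap.2 0) * z.swap.2 j / (1 - z.swap.2 0)) := by
      funext j
      by_cases hj : j = 0
      · rw [if_pos hj, if_pos hj]; show _ = 1 - z.2 0 + z.1 0; ring
      · rw [if_neg hj, if_neg hj]; rfl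
    rw [hfst]
    exact T''
end

section
/- Along any trajectory z^{(m)} = H^m(z^{(0)}) of the operator H, the difference of the first coordinates is invariant: x_1^{(m+1)} − y_1^{(m+1)} = x_1^{(m)} − y_1^{(m)} for all m ≥ 0, and consequently x_1^{(m)} − y_1^{(m)} = x_1^{(0)} − y_1^{(0)} for all m ≥ 0. -/
/-- Along any trajectory of `H`, the difference `x₁^{(m)} − y₁^{(m)}` of the first
coordinates is invariant. -/
theorem evolH_first_coord_difference_invariant (n ν : ℕ)
    (z : (Fin (n + 1) → ℝ) × (Fin (ν + 1) → ℝ))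
    (hz : z ∈ stdSimplex ℝ (Fin (n + 1)) ×ˢ stdSimplex ℝ (Fin (ν + 1))) :
    (∀ m : ℕ,
      ((evolH n ν)^[m + 1] z).1 0 - ((evolH n ν)^[m + 1] z).2 0 =
        ((evolH n ν)^[m] z).1 0 - ((evolH n ν)^[m] z).2 0) ∧
    (∀ m : ℕ,
      ((evolH n ν)^[m] z).1 0 - ((evolH n ν)^[m] z).2 0 = z.1 0 - z.2 0) := by
  have step : ∀ w : (Fin (n + 1) → ℝ) × (Fin (ν + 1) → ℝ),
      (evolH n ν w).1 0 - (evolH n ν w).2 0 = w.1 0 - w.2 0 := by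
    intro w
    simp [evolH]
    ring
  have h1 : ∀ m : ℕ,
      ((evolH n ν)^[m + 1] z).1 0 - ((evolH n ν)^[m + 1] z).2 0 =
        ((evolH n ν)^[m] z).1 0 - ((evolH n ν)^[m] z).2 0 := by
    intro m
    rw [Function.iterate_succ_apply']
    exact step _
  refine ⟨h1, ?_⟩
  intro m
  induction m with
  | zero => rfl
  | succ k ih => rw [h1 k, ih]
end

section
/- Assume a,b,c,d ∈ [0,1] satisfy b(d−c) = b−a and c(b−1) ≠ 1−d. Then the denominators c(1−b)+(1−d) and a(1−d)+c(1−b)+(1−b)(1−d) are nonzero, and the point P_0 = ( a(1−d) / (a(1−d)+c(1−b)+(1−b)(1−d)) , c(1−b) / (c(1−b)+(1−d)) ) is a fixed point of the operator T. -/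
/-- The evolution operator `T(x,y) = ((1−y)(a+(b−a)x), (1−x)(c+(d−c)y))` on `[0,1]²`. -/
def opT (a b c d : ℝ) (p : ℝ × ℝ) : ℝ × ℝ :=
  ((1 - p.2) * (a + (b - a) * p.1), (1 - p.1) * (c + (d - c) * p.2))

/-- If `b(d−c) = b−a` and `c(b−1) ≠ 1−d`, the denominators are nonzero and `P₀` is a
fixed point of `T`. -/
theorem fix_opT_P0 (a b c d : ℝ)
    (ha : a ∈ Set.Icc (0 : ℝ) 1) (hb : b ∈ Set.Icc (0 : ℝ) 1)
    (hc : c ∈ Set.Icc (0 : ℝ) 1) (hd : d ∈ Set.Icc (0 : ℝ) 1)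
    (h1 : b * (d - c) = b - a) (h2 : c * (b - 1) ≠ 1 - d) :
    c * (1 - b) + (1 - d) ≠ 0 ∧
    a * (1 - d) + c * (1 - b) + (1 - b) * (1 - d) ≠ 0 ∧
    opT a b c d
        (a * (1 - d) / (a * (1 - d) + c * (1 - b) + (1 - b) * (1 - d)),
          c * (1 - b) / (c * (1 - b) + (1 - d))) =
      (a * (1 - d) / (a * (1 - d) + c * (1 - b) + (1 - b) * (1 - d)),
        c * (1 - b) / (c * (1 - b) + (1 - d))) := by
  obtain ⟨ha0, ha1⟩ := ha
  obtain ⟨hb0, hb1⟩ := hb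
  obtain ⟨hc0, hc1⟩ := hc
  obtain ⟨hd0, hd1⟩ := hd
  have hD1 : c * (1 - b) + (1 - d) ≠ 0 := by
    intro h; apply h2; nlinarith [h]
  have hD2 : a * (1 - d) + c * (1 - b) + (1 - b) * (1 - d) ≠ 0 := by
    intro h
    have t1 : a * (1 - d) = 0 := by nlinarith
    have t2 : c * (1 - b) = 0 := by nlinarith
    have t3 : (1 - b) * (1 - d) = 0 := by nlinarith
    rcases mul_eq_zero.mp t3 with h3 | h3
    · -- b = 1
      have hb' : b = 1 := by linarith
      rcases mul_eq_zero.mp t1 with h4 | h4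
      · -- a = 0
        have : d - c = 1 := by rw [hb'] at h1; rw [h4] at h1; linarith
        have hd' : d = 1 := by nlinarith
        apply hD1; nlinarith
      · apply hD1; nlinarith
    · apply hD1; nlinarith
  refine ⟨hD1, hD2, ?_⟩
  unfold opT
  apply Prod.ext <;> simp only
  · generalize hE : a * (1 - d) + c * (1 - b) + (1 - b) * (1 - d) = E at hD2 ⊢
    generalize hF : c * (1 - b) + (1 - d) = F at hD1 ⊢
    field_simp
    subst hE hF
    ring
  · generalize hE : a * (1 - d) + c * (1 - b) + (1 - b) * (1 - d) = E at hD2 ⊢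
    generalize hF : c * (1 - b) + (1 - d) = F at hD1 ⊢
    field_simp
    subst hE hF
    linear_combination (-(c*(1-b)*(1-d))) * h1
end

section
/- Assume a,b,c,d ∈ [0,1] with a = c, a ≠ 0, and b = d = 1. Then for every y ∈ [0,1] the point P(y) = ( a(1−y) / (a(1−y)+y) , y ) is a fixed point of the operator T; in particular T has a continuum of fixed points. -/
lemma den_pos (a : ℝ) (ha : 0 < a) {y : ℝ} (hy : y ∈ Set.Icc (0 : ℝ) 1) :
    0 < a * (1 - y) + y := by
  obtain ⟨h0, h1⟩ := hy
  rcases eq_or_lt_of_le h0 with h | h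
  · simp [← h]; linarith
  · nlinarith

lemma fix_pt (a : ℝ) (ha : 0 < a) {y : ℝ} (hy : y ∈ Set.Icc (0 : ℝ) 1) :
    opT a 1 a 1 (a * (1 - y) / (a * (1 - y) + y), y) =
      (a * (1 - y) / (a * (1 - y) + y), y) := by
  have hD := den_pos a ha hy
  have hD' : a * (1 - y) + y ≠ 0 := ne_of_gt hD
  simp only [opT, Prod.mk.injEq]
  constructor
  · have hX : a * (1 - y) / (a * (1 - y) + y) * (a * (1 - y) + y) = a * (1 - y) :=
      div_mul_cancel₀ _ hD'
    linear_combination (-1 : ℝ) * hX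
  · field_simp
    ring

/-- If `a = c ≠ 0` and `b = d = 1`, then every point `P(y) = (a(1−y)/(a(1−y)+y), y)`,
`y ∈ [0,1]`, is a fixed point of `T`; in particular `T` has a continuum of fixed
points in `[0,1]²`. -/
theorem fix_opT_curve (a : ℝ) (ha : a ∈ Set.Icc (0 : ℝ) 1) (ha0 : a ≠ 0) :
    (∀ y ∈ Set.Icc (0 : ℝ) 1,
      opT a 1 a 1 (a * (1 - y) / (a * (1 - y) + y), y) =
        (a * (1 - y) / (a * (1 - y) + y), y)) ∧
    Cardinal.mk {p : ℝ × ℝ //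
        p ∈ Set.Icc (0 : ℝ) 1 ×ˢ Set.Icc (0 : ℝ) 1 ∧ opT a 1 a 1 p = p} =
      Cardinal.continuum := by
  have hapos : 0 < a := lt_of_le_of_ne ha.1 (Ne.symm ha0)
  refine ⟨fun y hy => fix_pt a hapos hy, ?_⟩
  apply le_antisymm
  · calc Cardinal.mk {p : ℝ × ℝ //
        p ∈ Set.Icc (0 : ℝ) 1 ×ˢ Set.Icc (0 : ℝ) 1 ∧ opT a 1 a 1 p = p}
        ≤ Cardinal.mk (ℝ × ℝ) := Cardinal.mk_subtype_le _
      _ = Cardinal.continuum := by simp [Cardinal.mk_real]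
  · have h01 : Cardinal.continuum = Cardinal.mk (Set.Icc (0 : ℝ) 1) := by
      rw [Cardinal.mk_Icc_real]; norm_num
    rw [h01]
    have hmem : ∀ y : Set.Icc (0 : ℝ) 1,
        ((a * (1 - (y : ℝ)) / (a * (1 - (y : ℝ)) + (y : ℝ)), (y : ℝ)) : ℝ × ℝ) ∈
          Set.Icc (0 : ℝ) 1 ×ˢ Set.Icc (0 : ℝ) 1 ∧
          opT a 1 a 1 (a * (1 - (y : ℝ)) / (a * (1 - (y : ℝ)) + (y : ℝ)), (y : ℝ)) =
            (a * (1 - (y : ℝ)) / (a * (1 - (y : ℝ)) + (y : ℝ)), (y : ℝ)) := by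
      intro y
      have hy := y.2
      have hD := den_pos a hapos hy
      refine ⟨⟨⟨?_, ?_⟩, hy⟩, fix_pt a hapos hy⟩
      · apply div_nonneg _ hD.le
        have := hy.2
        nlinarith
      · rw [div_le_one hD]
        have := hy.1
        linarith
    refine Cardinal.mk_le_of_injective (f := fun y : Set.Icc (0 : ℝ) 1 =>
      (⟨(a * (1 - (y : ℝ)) / (a * (1 - (y : ℝ)) + (y : ℝ)), (y : ℝ)), hmem y⟩ :
        {p : ℝ × ℝ // p ∈ Set.Icc (0 : ℝ) 1 ×ˢ Set.Icc (0 : ℝ) 1 ∧ opT a 1 a 1 p = p})) ?_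
    intro y z h
    have := congrArg (fun q => q.1.2) h
    exact Subtype.ext this
end

section
/- Let a,b ∈ [0,1] with 0 ≤ b < 1 and 1 − (1−b)²/4 < a ≤ 1. Then a > b, the discriminant (1−b)² − 4(1−a) is positive, the two points p_1 = (2a−b−1−√((1−b)²−4(1−a))) / (2(a−b)) and p_2 = (2a−b−1+√((1−b)²−4(1−a))) / (2(a−b)) are distinct, lie in [0,1], and form a 2-cycle of f: f(p_1) = p_2 and f(p_2) = p_1. -/
/-- The one-dimensional map `f(x) = (1−x)(a+(b−a)x)`. -/
def fmap (a b x : ℝ) : ℝ := (1 - x) * (a + (b - a) * x)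

/-- If `0 ≤ b < 1` and `1 − (1−b)²/4 < a ≤ 1`, then `a > b`, the discriminant
`(1−b)² − 4(1−a)` is positive, and the two points
`p_{1,2} = (2a−b−1 ∓ √((1−b)²−4(1−a)))/(2(a−b))` are distinct, lie in `[0,1]`,
and form a 2-cycle of `f`. -/
theorem fmap_two_cycle (a b : ℝ) (hb0 : 0 ≤ b) (hb1 : b < 1)
    (ha : 1 - (1 - b) ^ 2 / 4 < a) (ha1 : a ≤ 1) :
    b < a ∧ 0 < (1 - b) ^ 2 - 4 * (1 - a) ∧
    (2 * a - b - 1 - Real.sqrt ((1 - b) ^ 2 - 4 * (1 - a))) / (2 * (a - b)) ≠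
      (2 * a - b - 1 + Real.sqrt ((1 - b) ^ 2 - 4 * (1 - a))) / (2 * (a - b)) ∧
    (2 * a - b - 1 - Real.sqrt ((1 - b) ^ 2 - 4 * (1 - a))) / (2 * (a - b)) ∈
      Set.Icc (0 : ℝ) 1 ∧
    (2 * a - b - 1 + Real.sqrt ((1 - b) ^ 2 - 4 * (1 - a))) / (2 * (a - b)) ∈
      Set.Icc (0 : ℝ) 1 ∧
    fmap a b ((2 * a - b - 1 - Real.sqrt ((1 - b) ^ 2 - 4 * (1 - a))) / (2 * (a - b))) =
      (2 * a - b - 1 + Real.sqrt ((1 - b) ^ 2 - 4 * (1 - a))) / (2 * (a - b)) ∧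
    fmap a b ((2 * a - b - 1 + Real.sqrt ((1 - b) ^ 2 - 4 * (1 - a))) / (2 * (a - b))) =
      (2 * a - b - 1 - Real.sqrt ((1 - b) ^ 2 - 4 * (1 - a))) / (2 * (a - b)) := by
  have hD : 0 < (1 - b) ^ 2 - 4 * (1 - a) := by nlinarith
  set s := Real.sqrt ((1 - b) ^ 2 - 4 * (1 - a)) with hs_def
  have hs2 : s ^ 2 = (1 - b) ^ 2 - 4 * (1 - a) := Real.sq_sqrt hD.le
  have hs0 : 0 < s := Real.sqrt_pos.mpr hD
  have hba : b < a := by nlinarith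
  have hd0 : (0 : ℝ) < 2 * (a - b) := by linarith
  have hd : (2 : ℝ) * (a - b) ≠ 0 := ne_of_gt hd0
  -- √D ≤ 2a-b-1
  have hc0 : 0 < 2 * a - b - 1 := by nlinarith
  have hsle : s ≤ 2 * a - b - 1 := by
    nlinarith [Real.sqrt_nonneg ((1 - b) ^ 2 - 4 * (1 - a)), hs2]
  -- √D ≤ 1-b
  have hsle2 : s ≤ 1 - b := by
    nlinarith [hs2, Real.sqrt_nonneg ((1 - b) ^ 2 - 4 * (1 - a))]
  refine ⟨hba, hD, ?_, ?_, ?_, ?_, ?_⟩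
  · intro h
    rw [div_eq_div_iff hd hd] at h
    nlinarith
  · constructor
    · apply div_nonneg _ hd0.le; linarith
    · rw [div_le_one hd0]; nlinarith [hs0.le]
  · constructor
    · apply div_nonneg _ hd0.le; nlinarith [hs0.le]
    · rw [div_le_one hd0]; linarith
  · rw [fmap, eq_div_iff hd]
    have hab : a - b ≠ 0 := sub_ne_zero.mpr hba.ne'
    field_simp
    linear_combination (a - b) * hs2
  · rw [fmap, eq_div_iff hd]
    have hab : a - b ≠ 0 := sub_ne_zero.mpr hba.ne'
    field_simp
    linear_combination (a - b) * hs2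
end

section
/- Let a,b ∈ [0,1] with 0 ≤ b < 1 and 1 − (1−b)²/4 < a ≤ 1, and let p_1, p_2 be the 2-periodic points of f, i.e. p_{1,2} = (2a−b−1∓√((1−b)²−4(1−a))) / (2(a−b)). Then (f∘f)'(p_1) = (f∘f)'(p_2) = f'(p_1) f'(p_2) = 4 − 4a + 2b − b², and |4 − 4a + 2b − b²| < 1; in particular both 2-periodic points are attracting. -/
/-- If `0 ≤ b < 1` and `1 − (1−b)²/4 < a ≤ 1`, then at the 2-periodic points
`p_{1,2} = (2a−b−1 ∓ √((1−b)²−4(1−a)))/(2(a−b))` one has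
`(f∘f)'(p₁) = (f∘f)'(p₂) = f'(p₁)f'(p₂) = 4 − 4a + 2b − b²` with
`|4 − 4a + 2b − b²| < 1`; in particular both 2-periodic points are attracting. -/
theorem fmap_two_cycle_attracting (a b : ℝ) (hb0 : 0 ≤ b) (hb1 : b < 1)
    (ha : 1 - (1 - b) ^ 2 / 4 < a) (ha1 : a ≤ 1) :
    deriv (fmap a b ∘ fmap a b)
        ((2 * a - b - 1 - Real.sqrt ((1 - b) ^ 2 - 4 * (1 - a))) / (2 * (a - b))) =
      4 - 4 * a + 2 * b - b ^ 2 ∧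
    deriv (fmap a b ∘ fmap a b)
        ((2 * a - b - 1 + Real.sqrt ((1 - b) ^ 2 - 4 * (1 - a))) / (2 * (a - b))) =
      4 - 4 * a + 2 * b - b ^ 2 ∧
    deriv (fmap a b)
        ((2 * a - b - 1 - Real.sqrt ((1 - b) ^ 2 - 4 * (1 - a))) / (2 * (a - b))) *
      deriv (fmap a b)
        ((2 * a - b - 1 + Real.sqrt ((1 - b) ^ 2 - 4 * (1 - a))) / (2 * (a - b))) =
      4 - 4 * a + 2 * b - b ^ 2 ∧
    |4 - 4 * a + 2 * b - b ^ 2| < 1 := by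
  have hab : 0 < a - b := by nlinarith
  have hab' : a - b ≠ 0 := ne_of_gt hab
  set s : ℝ := Real.sqrt ((1 - b) ^ 2 - 4 * (1 - a)) with hs
  have hDpos : (0:ℝ) < (1 - b) ^ 2 - 4 * (1 - a) := by nlinarith
  have hs2 : s ^ 2 = (1 - b) ^ 2 - 4 * (1 - a) := Real.sq_sqrt hDpos.le
  set p1 : ℝ := (2 * a - b - 1 - s) / (2 * (a - b)) with hp1def
  set p2 : ℝ := (2 * a - b - 1 + s) / (2 * (a - b)) with hp2def
  have hf : ∀ x : ℝ, HasDerivAt (fmap a b) (b - 2 * a + 2 * (a - b) * x) x := by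
    intro x
    have h1 : HasDerivAt (fun x : ℝ => (1 - x) * (a + (b - a) * x))
        ((-1) * (a + (b - a) * x) + (1 - x) * ((b - a) * 1)) x := by
      exact HasDerivAt.mul ((hasDerivAt_id x).const_sub 1)
        (((hasDerivAt_id x).const_mul (b - a)).const_add a)
    have : HasDerivAt (fun x : ℝ => (1 - x) * (a + (b - a) * x))
        (b - 2 * a + 2 * (a - b) * x) x := by convert h1 using 1; ring
    exact this
  have hderiv : ∀ x : ℝ, deriv (fmap a b) x = b - 2 * a + 2 * (a - b) * x :=
    fun x => (hf x).deriv
  have hd1 : deriv (fmap a b) p1 = -1 - s := by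
    rw [hderiv, hp1def]; field_simp; ring
  have hd2 : deriv (fmap a b) p2 = -1 + s := by
    rw [hderiv, hp2def]; field_simp; ring
  have hswap1 : fmap a b p1 = p2 := by
    rw [fmap, hp1def, hp2def]
    field_simp
    linear_combination (a - b) * hs2
  have hswap2 : fmap a b p2 = p1 := by
    rw [fmap, hp1def, hp2def]
    field_simp
    linear_combination (a - b) * hs2
  have hprod : (-1 - s) * (-1 + s) = 4 - 4 * a + 2 * b - b ^ 2 := by nlinarith [hs2]
  have hc1 : deriv (fmap a b ∘ fmap a b) p1 = 4 - 4 * a + 2 * b - b ^ 2 := by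
    have := ((hf (fmap a b p1)).comp p1 (hf p1)).deriv
    rw [this, hswap1]
    rw [show b - 2 * a + 2 * (a - b) * p2 = deriv (fmap a b) p2 from (hderiv p2).symm,
      show b - 2 * a + 2 * (a - b) * p1 = deriv (fmap a b) p1 from (hderiv p1).symm,
      hd1, hd2]
    linarith [hprod, mul_comm (-1 + s) (-1 - s)]
  have hc2 : deriv (fmap a b ∘ fmap a b) p2 = 4 - 4 * a + 2 * b - b ^ 2 := by
    have := ((hf (fmap a b p2)).comp p2 (hf p2)).deriv
    rw [this, hswap2]
    rw [show b - 2 * a + 2 * (a - b) * p1 = deriv (fmap a b) p1 from (hderiv p1).symm,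
      show b - 2 * a + 2 * (a - b) * p2 = deriv (fmap a b) p2 from (hderiv p2).symm,
      hd1, hd2]
    linarith [hprod]
  refine ⟨hc1, hc2, ?_, ?_⟩
  · rw [hd1, hd2]; exact hprod
  · rw [abs_lt]; constructor <;> nlinarith
end

section
/- Let J be an ideal of the algebra A (a subspace with z w ∈ J for all z ∈ A and w ∈ J). Then either J contains the subspace spanned by {f_1 − f_i : 2 ≤ i ≤ n} ∪ {f_1 + g_k : 2 ≤ k ≤ ν}, or J is contained in the subspace W = { Σ_{i=2}^n a_i f_i + Σ_{k=2}^ν b_k g_k : Σ_{i=2}^n a_i = 0 and Σ_{k=2}^ν b_k = 0 }. -/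
open Finset

/-- The commutative bilinear multiplication of the quotient algebra
`A = 𝓑₁/⟨e^f_1 + e^m_1⟩` of dimension `(n+2) + (ν+1)` with basis
`f_1,…,f_{n+2}` (index `0` is `f_1`) and `g_2,…,g_{ν+2}`, determined by
`f_1 f_i = ½(f_1 − f_i)` for `i ≥ 2`, `f_1 g_k = ½(f_1 + g_k)`, all other
basis products being zero. -/
noncomputable def mulA (n ν : ℕ)
    (z w : (Fin (n + 2) → ℝ) × (Fin (ν + 1) → ℝ)) :
    (Fin (n + 2) → ℝ) × (Fin (ν + 1) → ℝ) :=
  (fun i =>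
    if i = 0 then
      (1 / 2) * ((∑ j : Fin (n + 2), if j = 0 then 0 else
          (z.1 0 * w.1 j + w.1 0 * z.1 j)) +
        ∑ k : Fin (ν + 1), (z.1 0 * w.2 k + w.1 0 * z.2 k))
    else -(1 / 2) * (z.1 0 * w.1 i + w.1 0 * z.1 i),
   fun k => (1 / 2) * (z.1 0 * w.2 k + w.1 0 * z.2 k))

/-- Splitting off the `0`-th term of a sum over `Fin (m+1)`. -/
lemma sum_split_zero (m : ℕ) (f : Fin (m + 1) → ℝ) :
    (∑ j, f j) = f 0 + ∑ j, (if j = 0 then 0 else f j) := by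
  have h1 : (∑ j : Fin (m + 1), if j = 0 then f j else 0) = f 0 := by
    simp
  calc (∑ j, f j)
      = ∑ j, ((if j = 0 then f j else 0) + (if j = 0 then 0 else f j)) := by
        apply Finset.sum_congr rfl
        intro j _
        by_cases hj : j = 0 <;> simp [hj]
    _ = f 0 + ∑ j, (if j = 0 then 0 else f j) := by
        rw [Finset.sum_add_distrib, h1]

lemma mulA_f1_fst0 (n ν : ℕ) (w : (Fin (n + 2) → ℝ) × (Fin (ν + 1) → ℝ)) :
    (mulA n ν ((Pi.single 0 1 : Fin (n + 2) → ℝ), (0 : Fin (ν + 1) → ℝ)) w).1 0 =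
    (1 / 2) * ((∑ j : Fin (n + 2), if j = 0 then 0 else w.1 j) + ∑ k, w.2 k) := by
  unfold mulA
  simp only [if_pos rfl]
  have e1 : (∑ j : Fin (n + 2), if j = 0 then 0 else
      ((Pi.single 0 1 : Fin (n + 2) → ℝ) 0 * w.1 j +
        w.1 0 * (Pi.single 0 1 : Fin (n + 2) → ℝ) j)) =
      ∑ j : Fin (n + 2), if j = 0 then 0 else w.1 j := by
    apply Finset.sum_congr rfl
    intro j _
    by_cases hj : j = 0
    · simp [hj]
    · simp [hj, Pi.single_eq_of_ne hj]
  have e2 : (∑ k : Fin (ν + 1), ((Pi.single 0 1 : Fin (n + 2) → ℝ) 0 * w.2 k +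
      w.1 0 * (0 : Fin (ν + 1) → ℝ) k)) = ∑ k, w.2 k := by
    apply Finset.sum_congr rfl
    intro k _
    simp
  rw [e1, e2]
  simp

lemma mulA_f1_fst (n ν : ℕ) (w : (Fin (n + 2) → ℝ) × (Fin (ν + 1) → ℝ))
    (j : Fin (n + 2)) (hj : j ≠ 0) :
    (mulA n ν ((Pi.single 0 1 : Fin (n + 2) → ℝ), (0 : Fin (ν + 1) → ℝ)) w).1 j =
    -(1 / 2) * w.1 j := by
  unfold mulA
  simp [if_neg hj, Pi.single_eq_of_ne hj]

lemma mulA_f1_snd (n ν : ℕ) (w : (Fin (n + 2) → ℝ) × (Fin (ν + 1) → ℝ))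
    (k : Fin (ν + 1)) :
    (mulA n ν ((Pi.single 0 1 : Fin (n + 2) → ℝ), (0 : Fin (ν + 1) → ℝ)) w).2 k =
    (1 / 2) * w.2 k := by
  unfold mulA
  simp

/-- Any ideal `J` of the quotient algebra either contains all the elements
`f_1 − f_i` (`i ≥ 2`) and `f_1 + g_k`, or is contained in the subspace
`W = {Σ a_i f_i + Σ b_k g_k : a_1 = 0, Σ a_i = 0, Σ b_k = 0}`. -/
theorem ideals_of_quotient_algebra (n ν : ℕ)
    (J : Submodule ℝ ((Fin (n + 2) → ℝ) × (Fin (ν + 1) → ℝ)))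
    (hJ : ∀ z w, w ∈ J → mulA n ν z w ∈ J) :
    ((∀ i : Fin (n + 2), i ≠ 0 →
        (((Pi.single 0 1 : Fin (n + 2) → ℝ) - Pi.single i 1),
          (0 : Fin (ν + 1) → ℝ)) ∈ J) ∧
      (∀ k : Fin (ν + 1),
        ((Pi.single 0 1 : Fin (n + 2) → ℝ),
          (Pi.single k 1 : Fin (ν + 1) → ℝ)) ∈ J)) ∨
    (∀ z ∈ J, z.1 0 = 0 ∧ (∑ i, z.1 i) = 0 ∧ (∑ k, z.2 k) = 0) := by
  by_cases h : ∀ w ∈ J, w.1 0 = 0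
  · right
    intro z hz
    have hz0 : z.1 0 = 0 := h z hz
    set f1 : (Fin (n + 2) → ℝ) × (Fin (ν + 1) → ℝ) :=
      ((Pi.single 0 1 : Fin (n + 2) → ℝ), 0) with hf1
    have hu : mulA n ν f1 z ∈ J := hJ f1 z hz
    have hu0 : (mulA n ν f1 z).1 0 = 0 := h _ hu
    have hv0 : (mulA n ν f1 (mulA n ν f1 z)).1 0 = 0 := h _ (hJ f1 _ hu)
    rw [mulA_f1_fst0] at hu0
    rw [mulA_f1_fst0] at hv0
    have e1 : (∑ j : Fin (n + 2), if j = 0 then 0 else (mulA n ν f1 z).1 j) =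
        -(1 / 2) * ∑ j : Fin (n + 2), (if j = 0 then 0 else z.1 j) := by
      rw [Finset.mul_sum]
      apply Finset.sum_congr rfl
      intro j _
      by_cases hj : j = 0
      · simp [hj]
      · rw [if_neg hj, if_neg hj, mulA_f1_fst n ν z j hj]
    have e2 : (∑ k, (mulA n ν f1 z).2 k) = (1 / 2) * ∑ k, z.2 k := by
      rw [Finset.mul_sum]
      apply Finset.sum_congr rfl
      intro k _
      exact mulA_f1_snd n ν z k
    rw [e1, e2] at hv0
    refine ⟨hz0, ?_, by linarith⟩
    rw [sum_split_zero, hz0]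
    linarith
  · left
    push_neg at h
    obtain ⟨w, hw, hw0⟩ := h
    have key : ∀ v u : (Fin (n + 2) → ℝ) × (Fin (ν + 1) → ℝ),
        mulA n ν u w = (w.1 0 / 2) • v → v ∈ J := by
      intro v u hv
      have hm := hJ u w hw
      rw [hv] at hm
      have := J.smul_mem (2 / w.1 0) hm
      rwa [smul_smul, div_mul_div_comm, mul_comm (w.1 0) 2,
        mul_div_mul_left _ _ (two_ne_zero), div_self hw0, one_smul] at this
    constructor
    · intro i hi
      apply key _ ((Pi.single i 1 : Fin (n + 2) → ℝ), (0 : Fin (ν + 1) → ℝ))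
      have hi0 : (Pi.single i 1 : Fin (n + 2) → ℝ) 0 = 0 :=
        Pi.single_eq_of_ne (Ne.symm hi) 1
      unfold mulA
      refine Prod.ext ?_ ?_
      · funext j
        simp only [Prod.smul_fst, Pi.smul_apply, smul_eq_mul, Pi.sub_apply]
        by_cases hj : j = 0
        · subst hj
          rw [if_pos rfl]
          have e1 : (∑ j : Fin (n + 2), if j = 0 then 0 else
              ((Pi.single i 1 : Fin (n + 2) → ℝ) 0 * w.1 j +
                w.1 0 * (Pi.single i 1 : Fin (n + 2) → ℝ) j)) =
              ∑ j : Fin (n + 2), w.1 0 * (Pi.single i 1 : Fin (n + 2) → ℝ) j := by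
            apply Finset.sum_congr rfl
            intro j _
            by_cases hj0 : j = 0
            · subst hj0; simp [hi0]
            · rw [if_neg hj0, hi0, zero_mul, zero_add]
          have e2 : (∑ k : Fin (ν + 1), ((Pi.single i 1 : Fin (n + 2) → ℝ) 0 * w.2 k +
              w.1 0 * (0 : Fin (ν + 1) → ℝ) k)) = 0 := by
            apply Finset.sum_eq_zero
            intro k _
            simp [hi0]
          rw [e1, e2, ← Finset.mul_sum]
          rw [Pi.single_eq_same, Pi.single_eq_of_ne (Ne.symm hi)]
          simp only [Finset.sum_pi_single', Finset.mem_univ, if_true]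
          ring
        · rw [if_neg hj, hi0, zero_mul, zero_add,
            Pi.single_eq_of_ne hj]
          by_cases hji : j = i
          · subst hji
            rw [Pi.single_eq_same]
            ring
          · rw [Pi.single_eq_of_ne hji]
            ring
      · funext k
        simp [hi0]
    · intro k
      apply key _ ((0 : Fin (n + 2) → ℝ), (Pi.single k 1 : Fin (ν + 1) → ℝ))
      unfold mulA
      refine Prod.ext ?_ ?_
      · funext j
        simp only [Prod.smul_fst, Pi.smul_apply, smul_eq_mul, Pi.zero_apply]
        by_cases hj : j = 0
        · subst hj
          rw [if_pos rfl]
          simp only [zero_mul, mul_zero, add_zero, zero_add, ite_self,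
            Finset.sum_const_zero, ← Finset.mul_sum, Pi.single_eq_same,
            Finset.sum_pi_single', Finset.mem_univ, if_true]
          ring
        · rw [if_neg hj, Pi.single_eq_of_ne hj]
          simp
      · funext k'
        simp only [Prod.smul_snd, Pi.smul_apply, smul_eq_mul, Pi.zero_apply, zero_mul, zero_add]
        ring
end
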